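/- The Vervaat transform V is an involution on the set X^U of excursions attaining their height at a unique coordinate: V(V(x)) = x for all x ∈ X^U, and for a positive excursion x ∈ X^{+,U} of height H(x), the level numbers transform as N_{-h}(V(x)) = N_{H(x)-1-h}(x) for h = 0,...,H(x)-1. -/

import Mathlib

/-- `x` restricted to `[0,θ]` is a positive excursion: starts and ends at `0`,
is strictly positive in the interior, and has jumps `±1`. -/
def IsPosExc (x : ℕ → ℤ) (θ : ℕ) : Prop :=
  x 0 = 0 ∧ x θ = 0 ∧ (∀ n, 0 < n → n < θ → 0 < x n) ∧
    (∀ n, n < θ → x (n + 1) - x n = 1 ∨ x (n + 1) - x n = -1)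

/-- `x` restricted to `[0,θ]` is a negative excursion. -/
def IsNegExc (x : ℕ → ℤ) (θ : ℕ) : Prop :=
  x 0 = 0 ∧ x θ = 0 ∧ (∀ n, 0 < n → n < θ → x n < 0) ∧
    (∀ n, n < θ → x (n + 1) - x n = 1 ∨ x (n + 1) - x n = -1)

/-- Number of individuals of the excursion `x` (of length `θ`) born at level `h`,
i.e. number of up-steps from `h` to `h+1`. -/
def levelCount (x : ℕ → ℤ) (θ : ℕ) (h : ℤ) : ℕ :=
  ((Finset.range θ).filter (fun n => x n = h ∧ x (n + 1) = x n + 1)).card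

/-- For negative excursions: number of individuals born at level `h`,
i.e. number of down-steps from `h` to `h-1`. -/
def levelCountDown (x : ℕ → ℤ) (θ : ℕ) (h : ℤ) : ℕ :=
  ((Finset.range θ).filter (fun n => x n = h ∧ x (n + 1) = x n - 1)).card

/-- `(b,t)` is (the birth/death time pair of) an individual of the excursion `x`:
born at time `b` at level `x b`, with an up-step at `b`, dying at the first
return time `t` to its birth level. -/
def IsIndividual (x : ℕ → ℤ) (θ b t : ℕ) : Prop :=
  b < t ∧ t ≤ θ ∧ x (b + 1) = x b + 1 ∧ x t = x b ∧
    ∀ n, b < n → n < t → x n ≠ x b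

/-- Crossing lemma: for a ±1-step path starting and ending at or below `k`,
the number of up-steps from `k` equals the number of down-steps from `k+1`. -/
lemma crossing_lemma (x : ℕ → ℤ) (θ : ℕ) (k : ℤ) (h0 : x 0 ≤ k) (hθ : x θ ≤ k)
    (hstep : ∀ n, n < θ → x (n + 1) - x n = 1 ∨ x (n + 1) - x n = -1) :
    ((Finset.range θ).filter (fun n => x n = k ∧ x (n + 1) = x n + 1)).card =
    ((Finset.range θ).filter (fun n => x n = k + 1 ∧ x (n + 1) = x n - 1)).card := by
  have key : ∀ n ∈ Finset.range θ,
      ((if x n = k ∧ x (n + 1) = x n + 1 then (1 : ℤ) else 0)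
        - (if x n = k + 1 ∧ x (n + 1) = x n - 1 then (1 : ℤ) else 0))
      = (if k < x (n + 1) then (1 : ℤ) else 0) - (if k < x n then (1 : ℤ) else 0) := by
    intro n hn
    rcases hstep n (Finset.mem_range.mp hn) with hs | hs <;> split_ifs <;> omega
  have hsum := Finset.sum_congr rfl key
  rw [Finset.sum_range_sub (fun n => if k < x n then (1 : ℤ) else 0)] at hsum
  rw [Finset.sum_sub_distrib, Finset.sum_boole, Finset.sum_boole] at hsum
  split_ifs at hsum <;> omega

/-- the Vervaat transform is an involution on excursions whose
height is attained at a unique coordinate, and for a positive such excursion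
the level numbers transform as `N_{-h}(V(x)) = N_{H-1-h}(x)`, `0 ≤ h ≤ H-1`. -/
theorem vervaat_involution_and_level_numbers (x v w : ℕ → ℤ) (θ m H : ℕ)
    (hx : IsPosExc x θ) (hm : 0 < m) (hmθ : m < θ) (hxm : x m = (H : ℤ))
    (hmax : ∀ n ≤ θ, x n ≤ (H : ℤ)) (huniq : ∀ n ≤ θ, x n = (H : ℤ) → n = m)
    (hv : ∀ n, v n = if n ≤ θ - m then x (n + m) - H else x (n + m - θ) - H)
    (hw : ∀ n, w n = if n ≤ θ - (θ - m) then v (n + (θ - m)) + H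
      else v (n + (θ - m) - θ) + H) :
    (∀ n ≤ θ, w n = x n) ∧
      ∀ h : ℕ, h < H →
        levelCountDown v θ (-(h : ℤ)) = levelCount x θ ((H : ℤ) - 1 - h) := by
  obtain ⟨hx0, hxθ, hpos, hstep⟩ := hx
  have hmθ' : m ≤ θ := le_of_lt hmθ
  -- values of v on the two ranges
  have hvA : ∀ n, n + m ≤ θ → v n = x (n + m) - H := by
    intro n hn
    rw [hv, if_pos (by omega)]
  have hvB : ∀ n, θ ≤ n + m → n ≤ θ → v n = x (n + m - θ) - H := by
    intro n h1 h2
    rw [hv]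
    split_ifs with hc
    · have e1 : n + m = θ := by omega
      have e2 : n + m - θ = 0 := by omega
      rw [e2, e1, hxθ, hx0]
    · rfl
  constructor
  · -- w = x on [0, θ]
    intro n hn
    rw [hw]
    have h1 : θ - (θ - m) = m := by omega
    rw [h1]
    split_ifs with h2
    · -- n ≤ m
      rcases Nat.eq_zero_or_pos n with hn0 | hn0
      · subst hn0
        rw [hvA (0 + (θ - m)) (by omega)]
        have e : 0 + (θ - m) + m = θ := by omega
        rw [e, hxθ, hx0]
        ring
      · rw [hvB (n + (θ - m)) (by omega) (by omega)]
        have e : n + (θ - m) + m - θ = n := by omega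
        rw [e]
        ring
    · -- m < n
      have h3 : n + (θ - m) - θ = n - m := by omega
      rw [h3, hvA (n - m) (by omega)]
      have e : n - m + m = n := by omega
      rw [e]
      ring
  · intro h hh
    have hcard : ((Finset.range θ).filter
          (fun n => v n = -(h : ℤ) ∧ v (n + 1) = v n - 1)).card
        = ((Finset.range θ).filter
          (fun n => x n = ((H : ℤ) - 1 - h) + 1 ∧ x (n + 1) = x n - 1)).card := by
      apply Finset.card_nbij' (fun n => if n < θ - m then n + m else n + m - θ)
        (fun n => if m ≤ n then n - m else n + (θ - m))
      · -- forward map lands in target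
        intro n hn
        simp only [Finset.mem_coe, Finset.mem_filter, Finset.mem_range] at hn ⊢
        obtain ⟨hnθ, hv1, hv2⟩ := hn
        by_cases hc : n + m < θ
        · rw [hvA n (by omega)] at hv1
          rw [hvA (n + 1) (by omega), hvA n (by omega)] at hv2
          have e : n + 1 + m = n + m + 1 := by omega
          rw [e] at hv2
          rw [if_pos (by omega)]
          refine ⟨by omega, by omega, by omega⟩
        · by_cases hc2 : n + m = θ
          · -- impossible: v n = -H ≠ -h
            rw [hvA n (by omega), hc2, hxθ] at hv1
            omega
          · rw [hvB n (by omega) (by omega)] at hv1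
            rw [hvB (n + 1) (by omega) (by omega), hvB n (by omega) (by omega)] at hv2
            have e : n + 1 + m - θ = n + m - θ + 1 := by omega
            rw [e] at hv2
            rw [if_neg (by omega)]
            refine ⟨by omega, by omega, by omega⟩
      · -- backward map lands in source
        intro n hn
        simp only [Finset.mem_coe, Finset.mem_filter, Finset.mem_range] at hn ⊢
        obtain ⟨hnθ, hx1, hx2⟩ := hn
        have hn0 : n ≠ 0 := by
          intro e
          rw [e, hx0] at hx1
          omega
        by_cases hc : m ≤ n
        · rw [if_pos hc]
          have e1 : n - m + m = n := by omega
          have e2 : n - m + 1 + m = n + 1 := by omega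
          rw [hvA (n - m) (by omega), hvA (n - m + 1) (by omega), e1, e2]
          refine ⟨by omega, by omega, by omega⟩
        · rw [if_neg hc]
          have e1 : n + (θ - m) + m - θ = n := by omega
          have e2 : n + (θ - m) + 1 + m - θ = n + 1 := by omega
          rw [hvB (n + (θ - m)) (by omega) (by omega),
            hvB (n + (θ - m) + 1) (by omega) (by omega), e1, e2]
          refine ⟨by omega, by omega, by omega⟩
      · intro n hn
        simp only [Finset.mem_coe, Finset.mem_filter, Finset.mem_range] at hn
        have : n < θ := hn.1
        beta_reduce
        split_ifs <;> omega
      · intro n hn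
        simp only [Finset.mem_coe, Finset.mem_filter, Finset.mem_range] at hn
        have : n < θ := hn.1
        beta_reduce
        split_ifs <;> omega
    have hcross := crossing_lemma x θ ((H : ℤ) - 1 - h) (by omega) (by omega) hstep
    rw [levelCountDown, levelCount, hcard, hcross]
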